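/- For every σ ∈ Λ²₊V and every τ ∈ Λ²₋V, the endomorphisms K_σ and K_τ of V commute: K_σ ∘ K_τ = K_τ ∘ K_σ. -/

import Mathlib

open scoped RealInnerProductSpace

set_option maxHeartbeats 1000000 in
/-- Let `V` be a 4-dimensional oriented real inner product space with Hodge
star `⋆` on `Λ²V`, and `Λ²₊V`, `Λ²₋V` its `(±1)`-eigenspaces.  For every `σ ∈ Λ²₊V` and every
`τ ∈ Λ²₋V`, the endomorphisms `K_σ` and `K_τ` of `V` (defined by `⟨K_aX,Y⟩ = 2⟨a, X∧Y⟩`)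
commute: `K_σ ∘ K_τ = K_τ ∘ K_σ`. -/
theorem stmt_6 {V L : Type*}
    [NormedAddCommGroup V] [InnerProductSpace ℝ V]
    [NormedAddCommGroup L] [InnerProductSpace ℝ L]
    (h4 : Module.finrank ℝ V = 4)
    (o : Orientation ℝ V (Fin 4))
    (wedge : V →ₗ[ℝ] V →ₗ[ℝ] L)
    (wedge_self : ∀ v : V, wedge v v = 0)
    (wedge_span : Submodule.span ℝ {x : L | ∃ u v : V, wedge u v = x} = ⊤)
    (inner_wedge : ∀ v₁ v₂ v₃ v₄ : V,
      ⟪wedge v₁ v₂, wedge v₃ v₄⟫ =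
        (1 / 2) * (⟪v₁, v₃⟫ * ⟪v₂, v₄⟫ - ⟪v₁, v₄⟫ * ⟪v₂, v₃⟫))
    (hodge : L →ₗ[ℝ] L)
    (hodge_hodge : ∀ x : L, hodge (hodge x) = x)
    (hodge_wedge : ∀ b : OrthonormalBasis (Fin 4) ℝ V, b.toBasis.orientation = o →
      hodge (wedge (b 0) (b 1)) = wedge (b 2) (b 3) ∧
      hodge (wedge (b 0) (b 2)) = wedge (b 3) (b 1) ∧
      hodge (wedge (b 0) (b 3)) = wedge (b 1) (b 2))
    (σ τ : L) (hσ : hodge σ = σ) (hτ : hodge τ = -τ)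
    (Kσ Kτ : V →ₗ[ℝ] V)
    (hKσ : ∀ X Y : V, ⟪Kσ X, Y⟫ = 2 * ⟪σ, wedge X Y⟫)
    (hKτ : ∀ X Y : V, ⟪Kτ X, Y⟫ = 2 * ⟪τ, wedge X Y⟫) :
    Kσ ∘ₗ Kτ = Kτ ∘ₗ Kσ := by
  have hFD : FiniteDimensional ℝ V := .of_finrank_eq_succ h4
  set b : OrthonormalBasis (Fin 4) ℝ V := o.finOrthonormalBasis (by norm_num) h4 with hbdef
  have hbor : b.toBasis.orientation = o := o.finOrthonormalBasis_orientation (by norm_num) h4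
  have horth : ∀ i j : Fin 4, ⟪b i, b j⟫ = if i = j then 1 else 0 :=
    orthonormal_iff_ite.mp b.orthonormal
  have wskew : ∀ u v : V, wedge u v = - wedge v u := by
    intro u v
    have h := wedge_self (u + v)
    simp only [map_add, LinearMap.add_apply, wedge_self, zero_add, add_zero] at h
    exact eq_neg_of_add_eq_zero_right h
  have hww : ∀ i j k l : Fin 4, ⟪wedge (b i) (b j), wedge (b k) (b l)⟫ =
      ((if i = k then (1:ℝ) else 0) * (if j = l then 1 else 0)
        - (if i = l then 1 else 0) * (if j = k then 1 else 0)) / 2 := by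
    intro i j k l
    rw [inner_wedge, horth, horth, horth, horth]; ring
  have expand : ∀ x : L, x =
      (2*⟪x, wedge (b 0) (b 1)⟫) • wedge (b 0) (b 1)
      + (2*⟪x, wedge (b 0) (b 2)⟫) • wedge (b 0) (b 2)
      + (2*⟪x, wedge (b 0) (b 3)⟫) • wedge (b 0) (b 3)
      + (2*⟪x, wedge (b 1) (b 2)⟫) • wedge (b 1) (b 2)
      + (2*⟪x, wedge (b 1) (b 3)⟫) • wedge (b 1) (b 3)
      + (2*⟪x, wedge (b 2) (b 3)⟫) • wedge (b 2) (b 3) := by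
    intro x
    have hx : x ∈ Submodule.span ℝ {x : L | ∃ u v : V, wedge u v = x} := by
      rw [wedge_span]; exact Submodule.mem_top
    induction hx using Submodule.span_induction with
    | mem y hy =>
      obtain ⟨u, v, rfl⟩ := hy
      have key : wedge u v = ∑ i, ∑ j, (⟪b i, u⟫ * ⟪b j, v⟫) • wedge (b i) (b j) := by
        conv_lhs => rw [← b.sum_repr' u, ← b.sum_repr' v]
        simp only [map_sum, map_smul, LinearMap.sum_apply, LinearMap.smul_apply,
          Finset.smul_sum, smul_smul]
        rw [Finset.sum_comm]
        exact Finset.sum_congr rfl fun i _ => Finset.sum_congr rfl fun j _ => by rw [mul_comm]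
      simp only [inner_wedge]
      rw [key]
      simp only [Fin.sum_univ_four, wedge_self, smul_zero,
        wskew (b 1) (b 0), wskew (b 2) (b 0), wskew (b 3) (b 0),
        wskew (b 2) (b 1), wskew (b 3) (b 1), wskew (b 3) (b 2),
        real_inner_comm u, real_inner_comm v]
      module
    | zero => simp
    | add y z hy hz ihy ihz =>
      conv_lhs => rw [ihy, ihz]
      simp only [inner_add_left, mul_add, add_smul]
      module
    | smul c y hy ihy =>
      conv_lhs => rw [ihy]
      simp only [real_inner_smul_left]
      module
  -- Hodge star on basis wedges
  obtain ⟨H1, H2', H3⟩ := hodge_wedge b hbor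
  have H2 : hodge (wedge (b 0) (b 2)) = -wedge (b 1) (b 3) := by
    rw [H2', wskew]
  have H6 : hodge (wedge (b 2) (b 3)) = wedge (b 0) (b 1) := by
    rw [← H1, hodge_hodge]
  have H4 : hodge (wedge (b 1) (b 2)) = wedge (b 0) (b 3) := by
    rw [← H3, hodge_hodge]
  have H5 : hodge (wedge (b 1) (b 3)) = -wedge (b 0) (b 2) := by
    rw [← hodge_hodge (wedge (b 0) (b 2)), H2]; simp
  -- self-dual relations for σ
  have hhσ : σ =
      (2*⟪σ, wedge (b 0) (b 1)⟫) • wedge (b 2) (b 3)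
      + (2*⟪σ, wedge (b 0) (b 2)⟫) • (-wedge (b 1) (b 3))
      + (2*⟪σ, wedge (b 0) (b 3)⟫) • wedge (b 1) (b 2)
      + (2*⟪σ, wedge (b 1) (b 2)⟫) • wedge (b 0) (b 3)
      + (2*⟪σ, wedge (b 1) (b 3)⟫) • (-wedge (b 0) (b 2))
      + (2*⟪σ, wedge (b 2) (b 3)⟫) • wedge (b 0) (b 1) := by
    conv_lhs => rw [← hσ]
    conv_lhs => rw [expand σ]
    simp only [map_add, map_smul, H1, H2, H3, H4, H5, H6]
  have rσ1 : ⟪σ, wedge (b 2) (b 3)⟫ = ⟪σ, wedge (b 0) (b 1)⟫ := by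
    conv_lhs => rw [hhσ]
    simp [inner_add_left, real_inner_smul_left, inner_neg_left, hww]
    rw [← real_inner_self_eq_norm_sq, hww]; norm_num
    rw [if_neg (by decide)]; ring
  have rσ2 : ⟪σ, wedge (b 1) (b 3)⟫ = -⟪σ, wedge (b 0) (b 2)⟫ := by
    conv_lhs => rw [hhσ]
    simp [inner_add_left, real_inner_smul_left, inner_neg_left, hww]
    rw [← real_inner_self_eq_norm_sq, hww]; norm_num
    rw [if_neg (by decide)]; ring
  have rσ3 : ⟪σ, wedge (b 1) (b 2)⟫ = ⟪σ, wedge (b 0) (b 3)⟫ := by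
    conv_lhs => rw [hhσ]
    simp [inner_add_left, real_inner_smul_left, inner_neg_left, hww]
    rw [← real_inner_self_eq_norm_sq, hww]; norm_num
    rw [if_neg (by decide)]; ring
  -- anti-self-dual relations for τ
  have hhτ : -τ =
      (2*⟪τ, wedge (b 0) (b 1)⟫) • wedge (b 2) (b 3)
      + (2*⟪τ, wedge (b 0) (b 2)⟫) • (-wedge (b 1) (b 3))
      + (2*⟪τ, wedge (b 0) (b 3)⟫) • wedge (b 1) (b 2)
      + (2*⟪τ, wedge (b 1) (b 2)⟫) • wedge (b 0) (b 3)
      + (2*⟪τ, wedge (b 1) (b 3)⟫) • (-wedge (b 0) (b 2))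
      + (2*⟪τ, wedge (b 2) (b 3)⟫) • wedge (b 0) (b 1) := by
    conv_lhs => rw [← hτ]
    conv_lhs => rw [expand τ]
    simp only [map_add, map_smul, H1, H2, H3, H4, H5, H6]
  have rτ1 : ⟪τ, wedge (b 2) (b 3)⟫ = -⟪τ, wedge (b 0) (b 1)⟫ := by
    have := congrArg (fun z => ⟪z, wedge (b 0) (b 1)⟫) hhτ
    simp only [inner_neg_left, inner_add_left, real_inner_smul_left, hww] at this
    simp at this
    linarith
  have rτ2 : ⟪τ, wedge (b 1) (b 3)⟫ = ⟪τ, wedge (b 0) (b 2)⟫ := by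
    have := congrArg (fun z => ⟪z, wedge (b 0) (b 2)⟫) hhτ
    simp only [inner_neg_left, inner_add_left, real_inner_smul_left, hww] at this
    simp at this
    linarith
  have rτ3 : ⟪τ, wedge (b 1) (b 2)⟫ = -⟪τ, wedge (b 0) (b 3)⟫ := by
    have := congrArg (fun z => ⟪z, wedge (b 0) (b 3)⟫) hhτ
    simp only [inner_neg_left, inner_add_left, real_inner_smul_left, hww] at this
    simp at this
    linarith
  -- value tables
  have sskew : ∀ i j : Fin 4, ⟪σ, wedge (b j) (b i)⟫ = -⟪σ, wedge (b i) (b j)⟫ := by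
    intro i j; rw [wskew]; simp
  have tskew : ∀ i j : Fin 4, ⟪τ, wedge (b j) (b i)⟫ = -⟪τ, wedge (b i) (b j)⟫ := by
    intro i j; rw [wskew]; simp
  have sdiag : ∀ i : Fin 4, ⟪σ, wedge (b i) (b i)⟫ = 0 := by
    intro i; rw [wedge_self]; simp
  have tdiag : ∀ i : Fin 4, ⟪τ, wedge (b i) (b i)⟫ = 0 := by
    intro i; rw [wedge_self]; simp
  -- expansion of the composites against the basis
  have expK : ∀ X Y : V, ⟪Kσ (Kτ X), Y⟫ =
      ∑ k, (2*⟪τ, wedge X (b k)⟫) * (2*⟪σ, wedge (b k) Y⟫) := by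
    intro X Y
    conv_lhs => rw [← b.sum_repr' (Kτ X)]
    rw [map_sum, sum_inner]
    refine Finset.sum_congr rfl fun k _ => ?_
    rw [map_smul, real_inner_smul_left, real_inner_comm (Kτ X) (b k), hKτ, hKσ]
  have expK' : ∀ X Y : V, ⟪Kτ (Kσ X), Y⟫ =
      ∑ k, (2*⟪σ, wedge X (b k)⟫) * (2*⟪τ, wedge (b k) Y⟫) := by
    intro X Y
    conv_lhs => rw [← b.sum_repr' (Kσ X)]
    rw [map_sum, sum_inner]
    refine Finset.sum_congr rfl fun k _ => ?_
    rw [map_smul, real_inner_smul_left, real_inner_comm (Kσ X) (b k), hKσ, hKτ]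
  have hs00 : ⟪σ, wedge (b 0) (b 0)⟫ = 0 := by rw [wedge_self]; simp
  have hs11 : ⟪σ, wedge (b 1) (b 1)⟫ = 0 := by rw [wedge_self]; simp
  have hs22 : ⟪σ, wedge (b 2) (b 2)⟫ = 0 := by rw [wedge_self]; simp
  have hs33 : ⟪σ, wedge (b 3) (b 3)⟫ = 0 := by rw [wedge_self]; simp
  have hs12 : ⟪σ, wedge (b 1) (b 2)⟫ = ⟪σ, wedge (b 0) (b 3)⟫ := by
    rw [rσ3]
  have hs13 : ⟪σ, wedge (b 1) (b 3)⟫ = (-⟪σ, wedge (b 0) (b 2)⟫) := by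
    rw [rσ2]
  have hs23 : ⟪σ, wedge (b 2) (b 3)⟫ = ⟪σ, wedge (b 0) (b 1)⟫ := by
    rw [rσ1]
  have hs10 : ⟪σ, wedge (b 1) (b 0)⟫ = (-⟪σ, wedge (b 0) (b 1)⟫) := by
    rw [wskew]; simp only [inner_neg_right]
  have hs20 : ⟪σ, wedge (b 2) (b 0)⟫ = (-⟪σ, wedge (b 0) (b 2)⟫) := by
    rw [wskew]; simp only [inner_neg_right]
  have hs30 : ⟪σ, wedge (b 3) (b 0)⟫ = (-⟪σ, wedge (b 0) (b 3)⟫) := by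
    rw [wskew]; simp only [inner_neg_right]
  have hs21 : ⟪σ, wedge (b 2) (b 1)⟫ = (-⟪σ, wedge (b 0) (b 3)⟫) := by
    rw [wskew]; simp only [inner_neg_right]
    rw [hs12]
    try ring
  have hs31 : ⟪σ, wedge (b 3) (b 1)⟫ = ⟪σ, wedge (b 0) (b 2)⟫ := by
    rw [wskew]; simp only [inner_neg_right]
    rw [hs13]
    try ring
  have hs32 : ⟪σ, wedge (b 3) (b 2)⟫ = (-⟪σ, wedge (b 0) (b 1)⟫) := by
    rw [wskew]; simp only [inner_neg_right]
    rw [hs23]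
    try ring
  have ht00 : ⟪τ, wedge (b 0) (b 0)⟫ = 0 := by rw [wedge_self]; simp
  have ht11 : ⟪τ, wedge (b 1) (b 1)⟫ = 0 := by rw [wedge_self]; simp
  have ht22 : ⟪τ, wedge (b 2) (b 2)⟫ = 0 := by rw [wedge_self]; simp
  have ht33 : ⟪τ, wedge (b 3) (b 3)⟫ = 0 := by rw [wedge_self]; simp
  have ht12 : ⟪τ, wedge (b 1) (b 2)⟫ = (-⟪τ, wedge (b 0) (b 3)⟫) := by
    rw [rτ3]
  have ht13 : ⟪τ, wedge (b 1) (b 3)⟫ = ⟪τ, wedge (b 0) (b 2)⟫ := by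
    rw [rτ2]
  have ht23 : ⟪τ, wedge (b 2) (b 3)⟫ = (-⟪τ, wedge (b 0) (b 1)⟫) := by
    rw [rτ1]
  have ht10 : ⟪τ, wedge (b 1) (b 0)⟫ = (-⟪τ, wedge (b 0) (b 1)⟫) := by
    rw [wskew]; simp only [inner_neg_right]
  have ht20 : ⟪τ, wedge (b 2) (b 0)⟫ = (-⟪τ, wedge (b 0) (b 2)⟫) := by
    rw [wskew]; simp only [inner_neg_right]
  have ht30 : ⟪τ, wedge (b 3) (b 0)⟫ = (-⟪τ, wedge (b 0) (b 3)⟫) := by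
    rw [wskew]; simp only [inner_neg_right]
  have ht21 : ⟪τ, wedge (b 2) (b 1)⟫ = ⟪τ, wedge (b 0) (b 3)⟫ := by
    rw [wskew]; simp only [inner_neg_right]
    rw [ht12]
    try ring
  have ht31 : ⟪τ, wedge (b 3) (b 1)⟫ = (-⟪τ, wedge (b 0) (b 2)⟫) := by
    rw [wskew]; simp only [inner_neg_right]
    rw [ht13]
    try ring
  have ht32 : ⟪τ, wedge (b 3) (b 2)⟫ = ⟪τ, wedge (b 0) (b 1)⟫ := by
    rw [wskew]; simp only [inner_neg_right]
    rw [ht23]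
    try ring
  have key : ∀ i j : Fin 4, ⟪Kσ (Kτ (b i)), b j⟫ = ⟪Kτ (Kσ (b i)), b j⟫ := by
    intro i j
    rw [expK, expK', Fin.sum_univ_four, Fin.sum_univ_four]
    fin_cases i <;> fin_cases j <;>
      simp [Fin.isValue, hs00, hs11, hs22, hs33, hs12, hs13, hs23, hs10, hs20, hs30, hs21, hs31, hs32, ht00, ht11, ht22, ht33, ht12, ht13, ht23, ht10, ht20, ht30, ht21, ht31, ht32] <;>
      ring
  apply Module.Basis.ext b.toBasis
  intro i
  simp only [LinearMap.comp_apply, OrthonormalBasis.coe_toBasis]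
  apply ext_inner_right ℝ
  intro Y
  conv_lhs => rw [← b.sum_repr' Y]
  conv_rhs => rw [← b.sum_repr' Y]
  simp only [inner_sum, real_inner_smul_right]
  exact Finset.sum_congr rfl fun j _ => by rw [key]
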